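/- If G is a torsion-free abelian group, then the group of units of the group algebra F_2[G] is isomorphic to G; more precisely, every unit of F_2[G] is of the form [g] for a unique g in G. -/

import Mathlib

open MonoidAlgebra Finset

private theorem aux_torsionFree_additive {G : Type*} [Group G]
    (hG : (∀ g : G, g ≠ 1 → ¬IsOfFinOrder g)) : ∀ a : Additive G, a ≠ 0 → ¬IsOfFinAddOrder a := by
  intro a ha hfin
  exact hG (Additive.toMul a) (by simpa using ha) (by rwa [← isOfFinAddOrder_ofMul_iff])

private theorem aux_twoUniqueProds (G : Type*) [CommGroup G]
    (hG : (∀ g : G, g ≠ 1 → ¬IsOfFinOrder g)) : TwoUniqueProds G := by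
  constructor
  intro A B hc
  classical
  set H : Subgroup G := Subgroup.closure (↑A ∪ ↑B) with hH
  have hHfg : H.FG := (Subgroup.fg_iff H).2 ⟨↑A ∪ ↑B, rfl, A.finite_toSet.union B.finite_toSet⟩
  haveI : Group.FG H := (Group.fg_iff_subgroup_fg H).2 hHfg
  haveI : AddGroup.FG (Additive H) := GroupFG.iff_add_fg.1 ‹_›
  haveI : Module.Finite ℤ (Additive H) := Module.Finite.iff_addGroup_fg.2 ‹_›
  haveI : IsMulTorsionFree G := IsMulTorsionFree.of_not_isOfFinOrder hG
  haveI : NoZeroSMulDivisors ℤ (Additive H) :=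
    inferInstance
  haveI : Module.Free ℤ (Additive H) := Module.free_of_finite_type_torsion_free'
  let b := Module.Free.chooseBasis ℤ (Additive H)
  let φ : H →ₙ* Multiplicative (Module.Free.ChooseBasisIndex ℤ (Additive H) →₀ ℤ) :=
    { toFun := fun h => Multiplicative.ofAdd (b.repr (Additive.ofMul h))
      map_mul' := fun x y => by
        simp only [← ofAdd_add, ← map_add]
        rfl }
  have hφ : Function.Injective φ := by
    intro x y hxy
    have : b.repr (Additive.ofMul x) = b.repr (Additive.ofMul y) := hxy
    exact b.repr.injective this
  haveI : UniqueProds H := UniqueProds.of_injective_mulHom φ hφ inferInstance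
  haveI : TwoUniqueProds H := UniqueProds.toTwoUniqueProds_of_group
  -- transfer the finsets to H
  have hAH : ∀ a ∈ A, a ∈ H := fun a ha =>
    Subgroup.subset_closure (Set.mem_union_left _ ha)
  have hBH : ∀ b ∈ B, b ∈ H := fun b hb =>
    Subgroup.subset_closure (Set.mem_union_right _ hb)
  let A' : Finset H := A.subtype (· ∈ H)
  let B' : Finset H := B.subtype (· ∈ H)
  have hAmap : A'.map (Function.Embedding.subtype _) = A := by
    rw [Finset.subtype_map, Finset.filter_true_of_mem hAH]
  have hBmap : B'.map (Function.Embedding.subtype _) = B := by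
    rw [Finset.subtype_map, Finset.filter_true_of_mem hBH]
  have hcard : 1 < #A' * #B' := by
    have : #A' = #A := by rw [← hAmap, Finset.card_map]
    have h2 : #B' = #B := by rw [← hBmap, Finset.card_map]
    rwa [this, h2]
  obtain ⟨p1, h1, p2, h2, hne, hu1, hu2⟩ := TwoUniqueProds.uniqueMul_of_one_lt_card hcard
  rw [Finset.mem_product] at h1 h2
  have key : ∀ (a0 : H) (b0 : H), UniqueMul A' B' a0 b0 → UniqueMul A B (a0 : G) (b0 : G) := by
    intro a0 b0 hu
    have := (UniqueMul.mulHom_map_iff (A := A') (B := B')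
      (Function.Embedding.subtype (· ∈ H)) (fun x y => rfl) (a0 := a0) (b0 := b0)).2 hu
    rwa [hAmap, hBmap] at this
  refine ⟨((p1.1 : G), (p1.2 : G)), ?_, ((p2.1 : G), (p2.2 : G)), ?_, ?_, key _ _ hu1, key _ _ hu2⟩
  · rw [Finset.mem_product]
    exact ⟨by rw [← hAmap]; exact Finset.mem_map_of_mem _ h1.1,
      by rw [← hBmap]; exact Finset.mem_map_of_mem _ h1.2⟩
  · rw [Finset.mem_product]
    exact ⟨by rw [← hAmap]; exact Finset.mem_map_of_mem _ h2.1,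
      by rw [← hBmap]; exact Finset.mem_map_of_mem _ h2.2⟩
  · simp only [Ne, Prod.ext_iff, not_and_or] at hne ⊢
    rcases hne with h | h
    · exact Or.inl (fun he => h (Subtype.ext he))
    · exact Or.inr (fun he => h (Subtype.ext he))

private theorem aux_unit {G : Type*} [CommGroup G] (hG : (∀ g : G, g ≠ 1 → ¬IsOfFinOrder g))
    (f g : MonoidAlgebra (ZMod 2) G) (h : f * g = 1) :
    ∃ a : G, f = MonoidAlgebra.of (ZMod 2) G a := by
  haveI := aux_twoUniqueProds G hG
  classical
  have hf : f ≠ 0 := by rintro rfl; rw [zero_mul] at h; exact one_ne_zero h.symm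
  have hg : g ≠ 0 := by rintro rfl; rw [mul_zero] at h; exact one_ne_zero h.symm
  have hcard : ¬ 1 < #f.coeff.support * #g.coeff.support := by
    intro hlt
    obtain ⟨p1, h1, p2, h2, hne, hu1, hu2⟩ := TwoUniqueProds.uniqueMul_of_one_lt_card hlt
    rw [Finset.mem_product] at h1 h2
    have supp1 : (1 : MonoidAlgebra (ZMod 2) G).coeff.support = {1} := by
      rw [MonoidAlgebra.one_def]; exact Finsupp.support_single_ne_zero _ one_ne_zero
    have key : ∀ (p : G × G), p.1 ∈ f.coeff.support → p.2 ∈ g.coeff.support →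
        UniqueMul f.coeff.support g.coeff.support p.1 p.2 → p.1 * p.2 = 1 := by
      intro p hp1 hp2 hu
      have e : (f * g).coeff (p.1 * p.2) = f.coeff p.1 * g.coeff p.2 :=
        MonoidAlgebra.mul_apply_mul_eq_mul_of_uniqueMul hu
      have : p.1 * p.2 ∈ (f * g).coeff.support := by
        rw [Finsupp.mem_support_iff, e]
        exact mul_ne_zero (Finsupp.mem_support_iff.1 hp1) (Finsupp.mem_support_iff.1 hp2)
      rw [h, supp1, Finset.mem_singleton] at this
      exact this
    have e1 := key p1 h1.1 h1.2 hu1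
    have e2 := key p2 h2.1 h2.2 hu2
    have := hu1 h2.1 h2.2 (by rw [e1, e2])
    exact hne (Prod.ext this.1.symm this.2.symm)
  push_neg at hcard
  have hfs : 0 < #f.coeff.support := Finset.card_pos.2 (Finsupp.support_nonempty_iff.2
    (by rintro h0; exact hf (by rw [← ofCoeff_coeff f, h0, ofCoeff_zero])))
  have hgs : 0 < #g.coeff.support := Finset.card_pos.2 (Finsupp.support_nonempty_iff.2
    (by rintro h0; exact hg (by rw [← ofCoeff_coeff g, h0, ofCoeff_zero])))
  have h1 : #f.coeff.support = 1 := by nlinarith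
  obtain ⟨a, c, hc, hfe⟩ := Finsupp.card_support_eq_one'.mp h1
  have hc1 : c = 1 := by
    have hall : ∀ x : ZMod 2, x ≠ 0 → x = 1 := by decide
    exact hall c hc
  exact ⟨a, by rw [← ofCoeff_coeff f, hfe, hc1]; rfl⟩

theorem fuchs_stmt3 (G : Type*) [CommGroup G] (hG : ∀ g : G, g ≠ 1 → ¬IsOfFinOrder g) :
    (∀ u : (MonoidAlgebra (ZMod 2) G)ˣ,
      ∃! g : G, (u : MonoidAlgebra (ZMod 2) G) = MonoidAlgebra.of (ZMod 2) G g) ∧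
    Nonempty (G ≃* (MonoidAlgebra (ZMod 2) G)ˣ) := by
  have huniv : ∀ u : (MonoidAlgebra (ZMod 2) G)ˣ,
      ∃ g : G, (u : MonoidAlgebra (ZMod 2) G) = MonoidAlgebra.of (ZMod 2) G g := by
    intro u
    exact aux_unit hG u.val ↑u⁻¹ u.mul_inv
  have hinj : Function.Injective (MonoidAlgebra.of (ZMod 2) G) := MonoidAlgebra.of_injective
  constructor
  · intro u
    obtain ⟨g, hg⟩ := huniv u
    exact ⟨g, hg, fun g' hg' => hinj (hg ▸ hg' ▸ rfl)⟩
  · let toUnits : G →* (MonoidAlgebra (ZMod 2) G)ˣ :=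
      { toFun := fun g => ⟨MonoidAlgebra.of (ZMod 2) G g, MonoidAlgebra.of (ZMod 2) G g⁻¹,
          by rw [← map_mul, mul_inv_cancel, map_one],
          by rw [← map_mul, inv_mul_cancel, map_one]⟩
        map_one' := Units.ext (map_one (MonoidAlgebra.of (ZMod 2) G))
        map_mul' := fun x y => Units.ext (map_mul (MonoidAlgebra.of (ZMod 2) G) x y) }
    refine ⟨MulEquiv.ofBijective toUnits ⟨?_, ?_⟩⟩
    · intro x y hxy
      exact hinj (congrArg Units.val hxy)
    · intro u
      obtain ⟨g, hg⟩ := huniv u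
      refine ⟨g, Units.ext hg.symm⟩
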